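/- arXiv:0812.1829 — 2 statements merged into one kernel-verified Lean document; each statement's English description precedes it below -/
import Mathlib

section
/- In a differential graded Lie algebra (L, d), the pairing {x, y} := (-1)^{|x|+1}[x, d(y)] satisfies the graded Jacobi-type identity up to boundaries: {x, {y, z}} - (-1)^{|x|+1}{{x, y}, z} - (-1)^{(|x|+1)(|y|+1)}{y, {x, z}} is a boundary in (L, d). -/
lemma neg_one_zpow_congr (a b : ℤ) (h : 2 ∣ (a - b)) : ((-1 : ℚ)) ^ a = (-1 : ℚ) ^ b := by
  obtain ⟨k, hk⟩ := h
  have ha : a = b + 2 * k := by omega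
  rw [ha, zpow_add₀ (by norm_num : (-1:ℚ) ≠ 0), zpow_mul]
  norm_num


/-- In a DG Lie algebra `(L, d)`, the pairing `{x, y} := (-1)^(|x|+1) [x, d y]`
satisfies the graded Jacobi-type identity up to boundaries. -/
theorem whitehead_pairing_jacobi_up_to_boundary
    {L : Type} [AddCommGroup L] [Module ℚ L]
    (deg : ℤ → Submodule ℚ L)
    (br : L →ₗ[ℚ] L →ₗ[ℚ] L)
    (d : L →ₗ[ℚ] L)
    (hbrdeg : ∀ i j : ℤ, ∀ x y : L, x ∈ deg i → y ∈ deg j → br x y ∈ deg (i + j))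
    (hddeg : ∀ i : ℤ, ∀ x : L, x ∈ deg i → d x ∈ deg (i - 1))
    (hdd : ∀ x : L, d (d x) = 0)
    (hanti : ∀ i j : ℤ, ∀ x y : L, x ∈ deg i → y ∈ deg j →
      br x y = ((-1 : ℚ) ^ (i * j + 1)) • br y x)
    (hjacobi : ∀ i j : ℤ, ∀ x y z : L, x ∈ deg i → y ∈ deg j →
      br x (br y z) = br (br x y) z + ((-1 : ℚ) ^ (i * j)) • br y (br x z))
    (hleib : ∀ i : ℤ, ∀ x y : L, x ∈ deg i →
      d (br x y) = br (d x) y + ((-1 : ℚ) ^ i) • br x (d y))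
    (p q r : ℤ) (x y z : L) (hx : x ∈ deg p) (hy : y ∈ deg q) (hz : z ∈ deg r) :
    ∃ w : L, d w =
      -- {x, {y, z}}
      ((-1 : ℚ) ^ (p + 1)) • br x (d (((-1 : ℚ) ^ (q + 1)) • br y (d z)))
      -- - (-1)^(|x|+1) {{x, y}, z}
      - ((-1 : ℚ) ^ (p + 1)) •
          (((-1 : ℚ) ^ (p + q)) • br (((-1 : ℚ) ^ (p + 1)) • br x (d y)) (d z))
      -- - (-1)^((|x|+1)(|y|+1)) {y, {x, z}}
      - ((-1 : ℚ) ^ ((p + 1) * (q + 1))) •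
          (((-1 : ℚ) ^ (q + 1)) • br y (d (((-1 : ℚ) ^ (p + 1)) • br x (d z)))) := by
  have h1 : d (br y (d z)) = br (d y) (d z) := by
    rw [hleib q y (d z) hy, hdd, map_zero, smul_zero, add_zero]
  have h2 : d (br x (d z)) = br (d x) (d z) := by
    rw [hleib p x (d z) hx, hdd, map_zero, smul_zero, add_zero]
  have hJ := hjacobi p (q - 1) x (d y) (d z) hx (hddeg q y hy)
  refine ⟨((-1 : ℚ) ^ (p * q + q)) • br y (br x (d z)), ?_⟩
  rw [map_smul, hleib q y (br x (d z)) hy, h2]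
  rw [map_smul d, map_smul d, h1, map_smul (br x), map_smul (br y), h2, map_smul br, LinearMap.smul_apply, hJ]
  match_scalars
  · rw [mul_one, mul_one, ← zpow_add₀ (by norm_num : (-1:ℚ) ≠ 0),
        ← zpow_add₀ (by norm_num : (-1:ℚ) ≠ 0)]
    exact neg_one_zpow_congr _ _ ⟨-1, by ring⟩
  · have hneg : ∀ n : ℤ, -((-1:ℚ)) ^ n = (-1:ℚ) ^ (n + 1) := by
      intro n
      rw [zpow_add₀ (by norm_num : (-1:ℚ) ≠ 0), zpow_one]
      ring
    rw [mul_one, mul_one, ← zpow_add₀ (by norm_num : (-1:ℚ) ≠ 0),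
        ← zpow_add₀ (by norm_num : (-1:ℚ) ≠ 0), ← zpow_add₀ (by norm_num : (-1:ℚ) ≠ 0), hneg]
    exact neg_one_zpow_congr _ _ ⟨-p - 2, by ring⟩
  · rw [mul_one, mul_one, ← zpow_add₀ (by norm_num : (-1:ℚ) ≠ 0),
        ← zpow_add₀ (by norm_num : (-1:ℚ) ≠ 0), ← zpow_add₀ (by norm_num : (-1:ℚ) ≠ 0),
        neg_one_zpow_congr (p+1+(q+1)) (p+1+(p+q+(p+1))) ⟨-p, by ring⟩, sub_self]
end

section
/- Let ψ : (L, d_L) → (K, d_K) be a DG Lie algebra map. The bilinear pairing on cycles of the mapping cone defined by ⟦(a, α), (b, β)⟧ = ((-1)^p[a, b], (-1)^{p+1}[α, d_K(β)]) for cycles of degrees p and q induces a well-defined bilinear pairing [·,·]_w on homology H_*(Rel(ψ)) lowering total degree by 1, which is graded commutative in the Whitehead sense: [x, y]_w = (-1)^{|x||y|}[y, x]_w for homology classes x, y. -/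
private lemma negOne_zpow_congr {m n : ℤ} (h : Even (m - n)) : ((-1 : ℚ)) ^ m = (-1) ^ n := by
  rcases Int.even_or_odd m with hm | hm
  · rw [Even.neg_one_zpow hm, Even.neg_one_zpow
      (by rcases hm with ⟨k, hk⟩; rcases h with ⟨l, hl⟩; exact ⟨k - l, by omega⟩)]
  · rw [Odd.neg_one_zpow hm, Odd.neg_one_zpow
      (by rcases hm with ⟨k, hk⟩; rcases h with ⟨l, hl⟩; exact ⟨k - l, by omega⟩)]


/-- The pairing `⟦(a,α),(b,β)⟧ = ((-1)^p [a,b], (-1)^(p+1) [α, dK β])` on cycles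
of the mapping cone of a DG Lie algebra map sends cycles to cycles, sends a
boundary paired with a cycle (in either slot) to a boundary — hence induces a
well-defined pairing on homology lowering degree by one — and is graded
commutative in the Whitehead sense up to boundaries. -/
theorem mapping_cone_pairing_descends_and_is_graded_commutative
    {L K : Type} [AddCommGroup L] [Module ℚ L] [AddCommGroup K] [Module ℚ K]
    (degL : ℤ → Submodule ℚ L) (degK : ℤ → Submodule ℚ K)
    (brL : L →ₗ[ℚ] L →ₗ[ℚ] L) (brK : K →ₗ[ℚ] K →ₗ[ℚ] K)
    (dL : L →ₗ[ℚ] L) (dK : K →ₗ[ℚ] K)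
    (hbrLdeg : ∀ i j : ℤ, ∀ x y : L, x ∈ degL i → y ∈ degL j → brL x y ∈ degL (i + j))
    (hbrKdeg : ∀ i j : ℤ, ∀ x y : K, x ∈ degK i → y ∈ degK j → brK x y ∈ degK (i + j))
    (hdLdeg : ∀ i : ℤ, ∀ x : L, x ∈ degL i → dL x ∈ degL (i - 1))
    (hdKdeg : ∀ i : ℤ, ∀ x : K, x ∈ degK i → dK x ∈ degK (i - 1))
    (hdL : ∀ x : L, dL (dL x) = 0) (hdK : ∀ x : K, dK (dK x) = 0)
    (hantiL : ∀ i j : ℤ, ∀ x y : L, x ∈ degL i → y ∈ degL j →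
      brL x y = ((-1 : ℚ) ^ (i * j + 1)) • brL y x)
    (hantiK : ∀ i j : ℤ, ∀ x y : K, x ∈ degK i → y ∈ degK j →
      brK x y = ((-1 : ℚ) ^ (i * j + 1)) • brK y x)
    (hjacL : ∀ i j : ℤ, ∀ x y z : L, x ∈ degL i → y ∈ degL j →
      brL x (brL y z) = brL (brL x y) z + ((-1 : ℚ) ^ (i * j)) • brL y (brL x z))
    (hjacK : ∀ i j : ℤ, ∀ x y z : K, x ∈ degK i → y ∈ degK j →
      brK x (brK y z) = brK (brK x y) z + ((-1 : ℚ) ^ (i * j)) • brK y (brK x z))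
    (hleibL : ∀ i : ℤ, ∀ x y : L, x ∈ degL i →
      dL (brL x y) = brL (dL x) y + ((-1 : ℚ) ^ i) • brL x (dL y))
    (hleibK : ∀ i : ℤ, ∀ x y : K, x ∈ degK i →
      dK (brK x y) = brK (dK x) y + ((-1 : ℚ) ^ i) • brK x (dK y))
    (ψ : L →ₗ[ℚ] K)
    (hψlie : ∀ x y : L, ψ (brL x y) = brK (ψ x) (ψ y))
    (hψchain : ∀ x : L, ψ (dL x) = dK (ψ x))
    (hψdeg : ∀ i : ℤ, ∀ x : L, x ∈ degL i → ψ x ∈ degK i)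
    (p q : ℤ) (a b : L) (α β : K)
    (ha : a ∈ degL (p - 1)) (hb : b ∈ degL (q - 1))
    (hα : α ∈ degK p) (hβ : β ∈ degK q)
    (hacyc : dL a = 0) (hbcyc : dL b = 0)
    (hαcyc : dK α = -ψ a) (hβcyc : dK β = -ψ b) :
    -- the pairing of cycles is a cycle of degree p + q - 1
    (dL (((-1 : ℚ) ^ p) • brL a b) = 0 ∧
      ψ (((-1 : ℚ) ^ p) • brL a b) + dK (((-1 : ℚ) ^ (p + 1)) • brK α (dK β)) = 0)
    ∧
    -- if the first argument is a boundary, the pairing is a boundary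
    (∀ c : L, ∀ γ : K, c ∈ degL p → γ ∈ degK (p + 1) →
      a = -(dL c) → α = ψ c + dK γ →
      ∃ e : L, ∃ f : K,
        (-(dL e), ψ e + dK f) =
          (((-1 : ℚ) ^ p) • brL a b, ((-1 : ℚ) ^ (p + 1)) • brK α (dK β)))
    ∧
    -- if the second argument is a boundary, the pairing is a boundary
    (∀ c : L, ∀ γ : K, c ∈ degL q → γ ∈ degK (q + 1) →
      b = -(dL c) → β = ψ c + dK γ →
      ∃ e : L, ∃ f : K,
        (-(dL e), ψ e + dK f) =
          (((-1 : ℚ) ^ p) • brL a b, ((-1 : ℚ) ^ (p + 1)) • brK α (dK β)))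
    ∧
    -- graded commutativity up to boundary : ⟦ζa, ζb⟧ - (-1)^(pq) ⟦ζb, ζa⟧ bounds
    (∃ e : L, ∃ f : K,
      (-(dL e), ψ e + dK f) =
        (((-1 : ℚ) ^ p) • brL a b - ((-1 : ℚ) ^ (p * q)) • (((-1 : ℚ) ^ q) • brL b a),
          ((-1 : ℚ) ^ (p + 1)) • brK α (dK β)
            - ((-1 : ℚ) ^ (p * q)) • (((-1 : ℚ) ^ (q + 1)) • brK β (dK α)))) := by
  have hne : (-1 : ℚ) ≠ 0 := by norm_num
  have hsucc : ∀ m : ℤ, (-1 : ℚ) ^ (m + 1) = -((-1 : ℚ) ^ m) := by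
    intro m; rw [zpow_add_one₀ hne]; ring
  have hp1 : ((-1 : ℚ)) ^ p = -((-1 : ℚ)) ^ (p - 1) := by
    have h := hsucc (p - 1); rw [show p - 1 + 1 = p by ring] at h; exact h
  have hψa0 : dK (ψ a) = 0 := by rw [← hψchain, hacyc, map_zero]
  have hψb0 : dK (ψ b) = 0 := by rw [← hψchain, hbcyc, map_zero]
  refine ⟨⟨?_, ?_⟩, ?_, ?_, ?_⟩
  · -- cycle condition, first component
    rw [map_smul, hleibL (p - 1) a b ha, hacyc, hbcyc]
    simp
  · -- cycle condition, second component
    rw [map_smul, map_smul, hψlie, hleibK p α (dK β) hα, hdK β, hαcyc, hβcyc, hsucc p]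
    simp
  · -- first argument a boundary
    intro c γ hc hγ hac hαγ
    have hdc : dL c = -a := by rw [hac, neg_neg]
    refine ⟨((-1 : ℚ) ^ p) • brL c b, ((-1 : ℚ) ^ p) • brK γ (ψ b), ?_⟩
    refine Prod.ext ?_ ?_
    · show -(dL (((-1 : ℚ) ^ p) • brL c b)) = ((-1 : ℚ) ^ p) • brL a b
      rw [map_smul, hleibL p c b hc, hbcyc, hdc]
      simp
    · show ψ (((-1 : ℚ) ^ p) • brL c b) + dK (((-1 : ℚ) ^ p) • brK γ (ψ b))
          = ((-1 : ℚ) ^ (p + 1)) • brK α (dK β)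
      rw [map_smul, map_smul, hψlie, hleibK (p + 1) γ (ψ b) hγ, hψb0, hβcyc, hαγ, hsucc p]
      simp [smul_add, map_add, smul_smul]
  · -- second argument a boundary
    intro c γ hc hγ hbc hβγ
    have hdc : dL c = -b := by rw [hbc, neg_neg]
    have hdKψc : dK (ψ c) = -(ψ b) := by rw [← hψchain, hdc, map_neg]
    refine ⟨-(brL a c), -(brK α (ψ c)), ?_⟩
    refine Prod.ext ?_ ?_
    · show -(dL (-(brL a c))) = ((-1 : ℚ) ^ p) • brL a b
      rw [map_neg, neg_neg, hleibL (p - 1) a c ha, hacyc, hdc, hp1]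
      simp
    · show ψ (-(brL a c)) + dK (-(brK α (ψ c))) = ((-1 : ℚ) ^ (p + 1)) • brK α (dK β)
      rw [map_neg, map_neg, hψlie, hleibK p α (ψ c) hα, hαcyc, hdKψc, hβcyc, hsucc p]
      simp
  · -- graded commutativity up to boundary
    have hsigns : ((-1 : ℚ)) ^ p * ((-1 : ℚ)) ^ ((p - 1) * (q - 1) + 1)
        = ((-1 : ℚ)) ^ (p * q) * ((-1 : ℚ)) ^ q := by
      rw [← zpow_add₀ hne, ← zpow_add₀ hne]
      exact negOne_zpow_congr ⟨1 - q, by ring⟩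
    have hsigns2 : ((-1 : ℚ)) ^ ((p - 1) * q + 1) = ((-1 : ℚ)) ^ (p * q) * ((-1 : ℚ)) ^ (q + 1) := by
      rw [← zpow_add₀ hne]
      exact negOne_zpow_congr ⟨-q, by ring⟩
    refine ⟨0, -(brK α β), ?_⟩
    refine Prod.ext ?_ ?_
    · show -(dL 0) = ((-1 : ℚ) ^ p) • brL a b - ((-1 : ℚ) ^ (p * q)) • (((-1 : ℚ) ^ q) • brL b a)
      rw [hantiL (p - 1) (q - 1) a b ha hb, smul_smul, smul_smul, hsigns]
      simp
    · show ψ (0 : L) + dK (-(brK α β))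
          = ((-1 : ℚ) ^ (p + 1)) • brK α (dK β)
            - ((-1 : ℚ) ^ (p * q)) • (((-1 : ℚ) ^ (q + 1)) • brK β (dK α))
      rw [map_zero, zero_add, map_neg, hleibK p α β hα,
        hantiK (p - 1) q (dK α) β (hdKdeg p α hα) hβ, hsucc p, smul_smul, hsigns2]
      module
end
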